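/- Let G be a connected simple graph on n ≥ 6 vertices, let c₁c₂ be a non-edge of G, and suppose every vertex of G other than c₁ and c₂ has degree exactly n-2. Then for every edge ab of G there is a Hamilton path of G whose endpoints are c₁ and c₂ and which contains the edge ab. -/

import Mathlib

open SimpleGraph

variable {V : Type*}

/-- `x 1, …, x m` is a path in `G` (1-indexed): injective on `[1, m]`, with consecutive
vertices adjacent. -/
def IsIndexedPath (G : SimpleGraph V) (x : ℕ → V) (m : ℕ) : Prop :=
  (∀ i j, 1 ≤ i → i ≤ m → 1 ≤ j → j ≤ m → x i = x j → i = j) ∧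
  ∀ i, 1 ≤ i → i < m → G.Adj (x i) (x (i + 1))

/-- The vertex set of the indexed path `x 1, …, x m`. -/
def pathVerts (x : ℕ → V) (m : ℕ) : Set V := {v | ∃ i, 1 ≤ i ∧ i ≤ m ∧ x i = v}

/-- `N_P(v)`: the neighbours of `v` among the vertices of the path. -/
def pathNbrs (G : SimpleGraph V) (x : ℕ → V) (m : ℕ) (v : V) : Set V :=
  {u | u ∈ pathVerts x m ∧ G.Adj v u}

/-- `N_P⁻(x₁)`: immediate predecessors on `P` of the path-neighbours of `x₁`. -/
def predNbrs (G : SimpleGraph V) (x : ℕ → V) (m : ℕ) : Set V :=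
  {v | ∃ i, 2 ≤ i ∧ i ≤ m ∧ G.Adj (x 1) (x i) ∧ v = x (i - 1)}

/-- `N_P⁺(x_m)`: immediate successors on `P` of the path-neighbours of `x_m`. -/
def succNbrs (G : SimpleGraph V) (x : ℕ → V) (m : ℕ) : Set V :=
  {v | ∃ i, 1 ≤ i ∧ i < m ∧ G.Adj (x m) (x i) ∧ v = x (i + 1)}

/-- `G` contains no cycle of length at least `k`, i.e. `c(G) < k`. -/
def NoCycleGE (G : SimpleGraph V) (k : ℕ) : Prop :=
  ∀ (v : V) (w : G.Walk v v), w.IsCycle → w.length < k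

/-- `G` contains a cycle of length at least `L`. -/
def HasCycleGE (G : SimpleGraph V) (L : ℕ) : Prop :=
  ∃ (v : V) (w : G.Walk v v), w.IsCycle ∧ L ≤ w.length

/-- `G` is 2-connected: at least 3 vertices and deleting any single vertex leaves a
connected graph. -/
def TwoConnected (G : SimpleGraph V) [Fintype V] : Prop :=
  3 ≤ Fintype.card V ∧ ∀ v : V, (G.induce {u | u ≠ v}).Connected

/-- The vertex set of the `α`-disintegration `H(G, α)` of `G`: the largest vertex set on
which the induced subgraph has minimum degree at least `α + 1`. -/
noncomputable def disint (G : SimpleGraph V) (α : ℕ) : Set V :=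
  ⋃₀ {S : Set V | ∀ v ∈ S, α + 1 ≤ {u | u ∈ S ∧ G.Adj v u}.ncard}

/-- `N_s(G)`: the number of `s`-cliques of `G`. -/
noncomputable def cliqueCount (G : SimpleGraph V) (s : ℕ) : ℕ :=
  {S : Finset V | G.IsNClique s S}.ncard

/-- `h_s(n, k, a) = C(k - a, s) + (n - k + a) · C(a, s - 1)`. -/
def hval (n k a s : ℕ) : ℕ :=
  Nat.choose (k - a) s + (n - k + a) * Nat.choose a (s - 1)

/-- The graph `H(n, k, a)` on `Fin n`: the first `a` vertices form the set `A`, the next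
`k - 2a` vertices form `C`, and the remaining `n - k + a` vertices form `B`; `A ∪ C` is a
clique and every vertex of `A` is joined to every vertex of `B`. -/
def Hgraph (n k a : ℕ) : SimpleGraph (Fin n) :=
  SimpleGraph.fromRel fun i j =>
    (i.val < a ∧ k - a ≤ j.val) ∨ (i.val < k - a ∧ j.val < k - a)

/-- `G` is isomorphic to a subgraph of `H`. -/
def IsSubgraphOf {W : Type*} (G : SimpleGraph V) (H : SimpleGraph W) : Prop :=
  ∃ f : V → W, Function.Injective f ∧ ∀ a b, G.Adj a b → H.Adj (f a) (f b)

/-- Every connected component of `H` is a star: there is an assignment of a "center" to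
each vertex such that every edge joins the common center of its endpoints to a leaf. -/
def IsStarForest (H : SimpleGraph V) : Prop :=
  ∃ f : V → V, ∀ a b, H.Adj a b → (f a = a ∧ f b = a) ∨ (f a = b ∧ f b = b)

/-- `(i, j)` is a crossing pair of the indexed path `x 1, …, x m`. -/
def CrossPair (G : SimpleGraph V) (x : ℕ → V) (m i j : ℕ) : Prop :=
  1 ≤ i ∧ i < j ∧ j ≤ m ∧ G.Adj (x m) (x i) ∧ G.Adj (x 1) (x j)

/-- `(i, j)` is a minimal crossing pair of the indexed path `x 1, …, x m`. -/
def MinCrossPair (G : SimpleGraph V) (x : ℕ → V) (m i j : ℕ) : Prop :=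
  CrossPair G x m i j ∧
    ∀ h, i < h → h < j → ¬G.Adj (x 1) (x h) ∧ ¬G.Adj (x m) (x h)

/-- One application of the successor operation along the path to a set of vertices. -/
def succStep (x : ℕ → V) (m : ℕ) (S : Set V) : Set V :=
  {v | ∃ i, 1 ≤ i ∧ i < m ∧ x i ∈ S ∧ v = x (i + 1)}

/-- `N_P^{+i}(x_m)`: the `i`-fold iterated successor set of `N_P(x_m)` along the path. -/
def iterNbrSucc (G : SimpleGraph V) (x : ℕ → V) (m i : ℕ) : Set V :=
  (succStep x m)^[i] (pathNbrs G x m (x m))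
section HamAux

open List

private lemma pchain_of_forall {R : V → V → Prop} :
    ∀ l : List V, l.Nodup → (∀ u ∈ l, ∀ v ∈ l, u ≠ v → R u v) → l.Chain' R
  | [], _, _ => List.isChain_nil
  | [_], _, _ => List.isChain_singleton _
  | x :: y :: t, hnd, h => by
      rw [List.Chain', List.isChain_cons_cons]
      refine ⟨h x (by simp) y (by simp) ?_, ?_⟩
      · rintro rfl; simp at hnd
      · exact pchain_of_forall (y :: t) hnd.of_cons
          (fun u hu v hv huv => h u (List.mem_cons_of_mem _ hu) v (List.mem_cons_of_mem _ hv) huv)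

private lemma exists_gap (w z : V) :
    ∀ l : List V, l.Nodup → 4 ≤ l.length →
    ∃ l₁ l₂ : List V, l = l₁ ++ l₂ ∧ l₁ ≠ [] ∧ l₂ ≠ [] ∧
      l₁.getLast? ≠ some w ∧ l₂.head? ≠ some z
  | [], _, hl => by simp at hl
  | [x], _, hl => by simp at hl
  | [x, y], _, hl => by simp at hl
  | [x, y, z'], _, hl => by simp at hl
  | x₁ :: x₂ :: x₃ :: x₄ :: t, hnd, _ => by
      have hd := hnd
      simp only [List.nodup_cons, List.mem_cons, not_or] at hd
      obtain ⟨⟨h12, h13, h14, -⟩, ⟨⟨h23, h24, -⟩, ⟨h34, -⟩, -⟩⟩ := hd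
      by_cases c1 : x₁ ≠ w ∧ x₂ ≠ z
      · exact ⟨[x₁], x₂ :: x₃ :: x₄ :: t, rfl, by simp, by simp,
          by simpa using c1.1, by simpa using c1.2⟩
      by_cases c2 : x₂ ≠ w ∧ x₃ ≠ z
      · exact ⟨[x₁, x₂], x₃ :: x₄ :: t, rfl, by simp, by simp,
          by simpa using c2.1, by simpa using c2.2⟩
      by_cases c3 : x₃ ≠ w ∧ x₄ ≠ z
      · exact ⟨[x₁, x₂, x₃], x₄ :: t, rfl, by simp, by simp,
          by simpa using c3.1, by simpa using c3.2⟩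
      exfalso
      rcases not_and_or.mp c1 with e1 | e1 <;> rcases not_and_or.mp c2 with e2 | e2 <;>
        rcases not_and_or.mp c3 with e3 | e3 <;> push_neg at e1 e2 e3 <;>
        subst_vars <;> simp_all

private lemma chain'_append_singleton {R : V → V → Prop} {l : List V} {c : V} (h : l ≠ [])
    (hch : l.Chain' R) (hlast : R (l.getLast h) c) : (l ++ [c]).Chain' R := by
  rw [List.Chain', List.isChain_append]
  refine ⟨hch, List.isChain_singleton _, ?_⟩
  intro x hx y hy
  simp only [List.head?_cons, Option.mem_def, Option.some.injEq] at hy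
  rw [List.getLast?_eq_getLast h, Option.mem_def, Option.some.injEq] at hx
  subst hy; rw [← hx]; exact hlast

private lemma insert_mid {R : V → V → Prop} (l : List V) (hch : l.Chain' R)
    (hnd : l.Nodup) (hlen : 4 ≤ l.length)
    (mid : List V) (hne : mid ≠ []) (hmch : mid.Chain' R) (hmnd : mid.Nodup)
    (hdisj : ∀ x ∈ mid, x ∉ l) (w z : V)
    (hleft : ∀ u ∈ l, u ≠ w → R u (mid.head hne))
    (hright : ∀ u ∈ l, u ≠ z → R (mid.getLast hne) u) :
    ∃ l₁ l₂ : List V, l = l₁ ++ l₂ ∧ l₁ ≠ [] ∧ l₂ ≠ [] ∧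
      (l₁ ++ mid ++ l₂).Chain' R ∧ (l₁ ++ mid ++ l₂).Nodup ∧
      (l₁ ++ mid ++ l₂).head? = l.head? ∧ (l₁ ++ mid ++ l₂).getLast? = l.getLast? ∧
      (∀ x, x ∈ l₁ ++ mid ++ l₂ ↔ x ∈ l ∨ x ∈ mid) ∧
      (l₁ ++ mid ++ l₂).length = l.length + mid.length := by
  obtain ⟨l₁, l₂, hsplit, h1ne, h2ne, hlw, hhz⟩ := exists_gap w z l hnd hlen
  subst hsplit
  rw [List.Chain', List.isChain_append] at hch
  obtain ⟨hc1, hc2, hlink⟩ := hch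
  rw [List.nodup_append'] at hnd
  obtain ⟨hn1, hn2, hd12⟩ := hnd
  refine ⟨l₁, l₂, rfl, h1ne, h2ne, ?_, ?_, ?_, ?_, ?_, ?_⟩
  · rw [List.append_assoc, List.Chain', List.isChain_append, List.isChain_append]
    refine ⟨hc1, ⟨hmch, hc2, ?_⟩, ?_⟩
    · -- link mid -> l₂
      intro x hx y hy
      rw [List.getLast?_eq_getLast hne, Option.mem_def, Option.some.injEq] at hx
      rw [List.head?_eq_head h2ne, Option.mem_def, Option.some.injEq] at hy
      subst hx; subst hy
      refine hright _ (List.mem_append_right _ (List.head_mem h2ne)) ?_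
      intro hh
      exact hhz (by rw [List.head?_eq_head h2ne, hh])
    · -- link l₁ -> mid ++ l₂
      intro x hx y hy
      rw [List.head?_append, List.head?_eq_head hne] at hy
      simp only [Option.mem_def, Option.or, Option.some.injEq] at hy
      subst hy
      refine hleft _ (List.mem_append_left _ ?_) ?_
      · exact List.mem_of_mem_getLast? hx
      · intro hh
        rw [Option.mem_def] at hx
        exact hlw (by rw [hx, hh])
  · rw [List.append_assoc, List.nodup_append']
    refine ⟨hn1, ?_, ?_⟩
    · rw [List.nodup_append']
      exact ⟨hmnd, hn2, fun x hx hx2 => hdisj x hx (List.mem_append_right _ hx2)⟩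
    · intro x hx hx2
      rcases List.mem_append.mp hx2 with h | h
      · exact hdisj x h (List.mem_append_left _ hx)
      · exact hd12 hx h
  · simp [List.append_assoc, List.head?_append, List.head?_eq_head h1ne]
  · simp [List.append_assoc, List.getLast?_append, List.getLast?_eq_getLast h2ne]
  · intro x
    simp only [List.mem_append]
    tauto
  · simp only [List.length_append]
    omega

private lemma extend_many {G : SimpleGraph V} (bad : V → V) (R : Finset V) :
    ∀ l : List V, l.Chain' G.Adj → l.Nodup → 4 ≤ l.length →
      (∀ v ∈ R, v ∉ l) →
      (∀ v ∈ R, ∀ u, u ≠ v → u ≠ bad v → G.Adj v u) →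
      ∃ l' : List V, l'.Chain' G.Adj ∧ l'.Nodup ∧ l'.head? = l.head? ∧
        l'.getLast? = l.getLast? ∧ (∀ x, x ∈ l' ↔ x ∈ l ∨ x ∈ R) ∧
        l'.length = l.length + R.card := by
  classical
  induction R using Finset.induction_on with
  | empty =>
      intro l hch hnd hlen _ _
      exact ⟨l, hch, hnd, rfl, rfl, by simp, by simp⟩
  | @insert v s hvs ih =>
      intro l hch hnd hlen hdisj hadj
      have hvl : v ∉ l := hdisj v (Finset.mem_insert_self v s)
      have hva := hadj v (Finset.mem_insert_self v s)
      obtain ⟨l₁, l₂, -, -, -, hch', hnd', hh', hl', hmem', hlen'⟩ :=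
        insert_mid l hch hnd hlen [v] (by simp) (List.isChain_singleton v) (by simp)
          (by intro x hx; simp at hx; subst hx; exact hvl) (bad v) (bad v)
          (by intro u hu h; exact (hva u (fun he => hvl (he ▸ hu)) h).symm)
          (by intro u hu h; exact hva u (fun he => hvl (he ▸ hu)) h)
      obtain ⟨l', hch'', hnd'', hh'', hl'', hmem'', hlen''⟩ :=
        ih (l₁ ++ [v] ++ l₂) hch' hnd' (by simp at hlen' ⊢; omega)
          (by
            intro u hu
            rw [hmem' u]
            rintro (h | h)
            · exact hdisj u (Finset.mem_insert_of_mem hu) h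
            · simp at h; subst h; exact hvs hu)
          (fun u hu => hadj u (Finset.mem_insert_of_mem hu))
      refine ⟨l', hch'', hnd'', hh''.trans hh', hl''.trans hl', ?_, ?_⟩
      · intro x
        rw [hmem'' x, hmem' x]
        simp only [Finset.mem_insert, List.mem_singleton]
        tauto
      · rw [hlen'', hlen', Finset.card_insert_of_notMem hvs]
        simp; omega

private noncomputable def nnbr (G : SimpleGraph V) (v : V) : V :=
  letI := Classical.propDecidable (∃ w, w ≠ v ∧ ¬G.Adj v w)
  if h : ∃ w, w ≠ v ∧ ¬G.Adj v w then h.choose else v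

private lemma nnbr_key [Fintype V] {G : SimpleGraph V} {c₁ c₂ : V}
    (hcard : 6 ≤ Fintype.card V)
    (hdeg : ∀ v : V, v ≠ c₁ → v ≠ c₂ → (G.neighborSet v).ncard = Fintype.card V - 2)
    {v : V} (h₁ : v ≠ c₁) (h₂ : v ≠ c₂) :
    nnbr G v ≠ v ∧ ¬G.Adj v (nnbr G v) ∧ ∀ w, w ≠ v → w ≠ nnbr G v → G.Adj v w := by
  classical
  have hN : (G.neighborFinset v).card = Fintype.card V - 2 := by
    rw [SimpleGraph.neighborFinset, ← Set.ncard_eq_toFinset_card']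
    exact hdeg v h₁ h₂
  set M : Finset V := Finset.univ \ insert v (G.neighborFinset v) with hM
  have hmemM : ∀ w, w ∈ M ↔ w ≠ v ∧ ¬G.Adj v w := by
    intro w
    simp [hM, Finset.mem_sdiff, SimpleGraph.mem_neighborFinset, not_or]
  have hMcard : M.card = 1 := by
    rw [hM, Finset.card_sdiff_of_subset (Finset.subset_univ _), Finset.card_insert_of_notMem
      (SimpleGraph.notMem_neighborFinset_self G v), hN, Finset.card_univ]
    omega
  obtain ⟨u, hu⟩ := Finset.card_eq_one.mp hMcard
  have huM : u ∈ M := hu ▸ Finset.mem_singleton_self u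
  have hex : ∃ w, w ≠ v ∧ ¬G.Adj v w := ⟨u, (hmemM u).mp huM⟩
  unfold nnbr
  rw [dif_pos hex]
  have hsp := hex.choose_spec
  refine ⟨hsp.1, hsp.2, ?_⟩
  intro w hwv hwn
  by_contra hadj
  have hwM : w ∈ M := (hmemM w).mpr ⟨hwv, hadj⟩
  have hcM : hex.choose ∈ M := (hmemM _).mpr ⟨hsp.1, hsp.2⟩
  rw [hu, Finset.mem_singleton] at hwM hcM
  exact hwn (hwM.trans hcM.symm)

private lemma nnbr_symm [Fintype V] {G : SimpleGraph V} {c₁ c₂ : V}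
    (hcard : 6 ≤ Fintype.card V)
    (hdeg : ∀ v : V, v ≠ c₁ → v ≠ c₂ → (G.neighborSet v).ncard = Fintype.card V - 2)
    {u v : V} (hu₁ : u ≠ c₁) (hu₂ : u ≠ c₂) (hv₁ : v ≠ c₁) (hv₂ : v ≠ c₂)
    (h : nnbr G u = v) : nnbr G v = u := by
  have keyu := nnbr_key hcard hdeg hu₁ hu₂
  have keyv := nnbr_key hcard hdeg hv₁ hv₂
  have hne : ¬G.Adj u v := h ▸ keyu.2.1
  by_contra hvu
  have huv : u ≠ v := fun he => keyu.1 (h.trans he.symm)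
  exact hne ((keyv.2.2 u huv (fun he => hvu he.symm)).symm)

private lemma exists_adj [Fintype V] {G : SimpleGraph V} (hcon : G.Connected)
    (hcard : 2 ≤ Fintype.card V) (x : V) : ∃ y, G.Adj x y := by
  obtain ⟨y, hy⟩ := Fintype.exists_ne_of_one_lt_card (by omega) x
  obtain ⟨w⟩ := hcon.preconnected x y
  cases w with
  | nil => exact absurd rfl hy
  | cons h p => exact ⟨_, h⟩

private lemma beta_pick [Fintype V] {G : SimpleGraph V} {c₁ c₂ : V}
    (hcon : G.Connected) (hcard : 6 ≤ Fintype.card V) (hc : c₁ ≠ c₂) (hne : ¬G.Adj c₁ c₂)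
    (hdeg : ∀ v : V, v ≠ c₁ → v ≠ c₂ → (G.neighborSet v).ncard = Fintype.card V - 2)
    {b : V} (hb₁ : b ≠ c₁) (hb₂ : b ≠ c₂) (hadjb : G.Adj c₁ b) :
    ∃ u w : V, (u ≠ c₁ ∧ u ≠ c₂) ∧ (w ≠ c₁ ∧ w ≠ c₂) ∧ u ≠ b ∧ w ≠ b ∧ u ≠ w ∧
      u ≠ nnbr G b ∧ nnbr G u ≠ w ∧ nnbr G w ≠ c₂ := by
  classical
  have keyb := nnbr_key hcard hdeg hb₁ hb₂
  have hnbc₁ : nnbr G b ≠ c₁ := fun h => keyb.2.1 (h ▸ hadjb.symm)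
  -- Step 1 : some interior w₀ ≠ b with nnbr w₀ ≠ c₂
  have hw₀ : ∃ w₀, (w₀ ≠ c₁ ∧ w₀ ≠ c₂) ∧ w₀ ≠ b ∧ nnbr G w₀ ≠ c₂ := by
    by_contra hcontra
    push_neg at hcontra
    have hnb : nnbr G b = c₂ := by
      by_contra hnbc
      have h1 : nnbr G b ≠ b := keyb.1
      have hp := hcontra (nnbr G b) ⟨hnbc₁, hnbc⟩ h1
      have keyp := nnbr_key hcard hdeg hnbc₁ hnbc
      have : G.Adj (nnbr G b) b := keyp.2.2 b (Ne.symm h1) (by rw [hp]; exact hb₂)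
      exact keyb.2.1 this.symm
    obtain ⟨y, hy⟩ := exists_adj hcon (by omega) c₂
    have hyc₂ : y ≠ c₂ := hy.ne'
    rcases eq_or_ne y c₁ with rfl | hyc₁
    · exact hne hy.symm
    rcases eq_or_ne y b with rfl | hyb
    · exact keyb.2.1 (hnb ▸ hy.symm)
    · have := hcontra y ⟨hyc₁, hyc₂⟩ hyb
      have keyy := nnbr_key hcard hdeg hyc₁ hyc₂
      exact keyy.2.1 (this ▸ hy.symm)
  obtain ⟨w₀, hw₀i, hw₀b, hw₀c⟩ := hw₀
  have keyw₀ := nnbr_key hcard hdeg hw₀i.1 hw₀i.2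
  by_cases hU : ∃ u, (u ≠ c₁ ∧ u ≠ c₂) ∧ u ≠ b ∧ u ≠ w₀ ∧ u ≠ nnbr G b ∧ u ≠ nnbr G w₀
  · obtain ⟨u, hui, hub, huw, hunb, hunw⟩ := hU
    refine ⟨u, w₀, hui, hw₀i, hub, hw₀b, huw, hunb, ?_, hw₀c⟩
    intro h
    exact hunw ((nnbr_symm hcard hdeg hui.1 hui.2 hw₀i.1 hw₀i.2 h).symm)
  · push_neg at hU
    set T : Finset V := Finset.univ \ {c₁, c₂, b} with hT
    have hTcard : 3 ≤ T.card := by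
      rw [hT, Finset.card_sdiff_of_subset (Finset.subset_univ _), Finset.card_univ]
      have : ({c₁, c₂, b} : Finset V).card ≤ 3 := by
        apply le_trans (Finset.card_insert_le _ _)
        apply Nat.succ_le_succ
        apply le_trans (Finset.card_insert_le _ _)
        simp
      omega
    have hsub : T ⊆ {w₀, nnbr G b, nnbr G w₀} := by
      intro x hx
      rw [hT, Finset.mem_sdiff] at hx
      simp only [Finset.mem_insert, Finset.mem_singleton, not_or] at hx
      obtain ⟨-, hx1, hx2, hx3⟩ := hx
      by_contra hxmem
      simp only [Finset.mem_insert, Finset.mem_singleton, not_or] at hxmem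
      exact hxmem.2.2 (hU x ⟨hx1, hx2⟩ hx3 hxmem.1 hxmem.2.1)
    have hcard2 : ∀ p q : V, T ⊆ {p, q} → False := by
      intro p q hpq
      have := Finset.card_le_card hpq
      have : ({p, q} : Finset V).card ≤ 2 := le_trans (Finset.card_insert_le _ _) (by simp)
      omega
    have d3 : nnbr G w₀ ≠ w₀ := keyw₀.1
    have d1 : nnbr G b ≠ w₀ := by
      intro h
      refine hcard2 w₀ (nnbr G w₀) (fun x hx => ?_)
      have := hsub hx
      simp only [Finset.mem_insert, Finset.mem_singleton] at this ⊢
      rcases this with h' | h' | h' <;> simp [h', h]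
    have d2 : nnbr G b ≠ nnbr G w₀ := by
      intro h
      refine hcard2 w₀ (nnbr G w₀) (fun x hx => ?_)
      have := hsub hx
      simp only [Finset.mem_insert, Finset.mem_singleton] at this ⊢
      rcases this with h' | h' | h' <;> simp [h', h]
    have hTeq : T = {w₀, nnbr G b, nnbr G w₀} := by
      apply Finset.eq_of_subset_of_card_le hsub
      refine le_trans ?_ hTcard
      apply le_trans (Finset.card_insert_le _ _)
      apply Nat.succ_le_succ
      apply le_trans (Finset.card_insert_le _ _)
      simp
    have hmemT : ∀ x, x ∈ T ↔ x ≠ c₁ ∧ x ≠ c₂ ∧ x ≠ b := by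
      intro x
      rw [hT, Finset.mem_sdiff]
      simp [not_or]
    have hxT : nnbr G b ∈ T := by rw [hTeq]; simp
    have hyT : nnbr G w₀ ∈ T := by rw [hTeq]; simp
    rw [hmemT] at hxT hyT
    have hxb : nnbr G (nnbr G b) = b := nnbr_symm hcard hdeg hb₁ hb₂ hxT.1 hxT.2.1 rfl
    have hyw : nnbr G (nnbr G w₀) = w₀ :=
      nnbr_symm hcard hdeg hw₀i.1 hw₀i.2 hyT.1 hyT.2.1 rfl
    exact ⟨nnbr G w₀, nnbr G b, ⟨hyT.1, hyT.2.1⟩, ⟨hxT.1, hxT.2.1⟩, hyT.2.2, hxT.2.2,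
      d2.symm, d2.symm, by rw [hyw]; exact d1.symm, by rw [hxb]; exact hb₂⟩

private lemma alpha_pick [Fintype V] {G : SimpleGraph V} {c₁ c₂ : V}
    (hcard : 6 ≤ Fintype.card V) (hc : c₁ ≠ c₂)
    (hdeg : ∀ v : V, v ≠ c₁ → v ≠ c₂ → (G.neighborSet v).ncard = Fintype.card V - 2)
    (S : Finset V) (hSint : ∀ v ∈ S, v ≠ c₁ ∧ v ≠ c₂) (hScard : 2 ≤ S.card) :
    (∃ u w, u ∈ S ∧ w ∈ S ∧ u ≠ w ∧ nnbr G u ≠ c₁ ∧ nnbr G u ≠ w ∧ nnbr G w ≠ c₂) ∨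
    (∀ v ∈ S, nnbr G v = c₁) ∨ (∀ v ∈ S, nnbr G v = c₂) ∨
    (∃ p, p ∈ S ∧ nnbr G p ∈ S ∧ ∀ v ∈ S, v = p ∨ v = nnbr G p) := by
  classical
  by_cases h₁ : ∀ v ∈ S, nnbr G v = c₁
  · exact Or.inr (Or.inl h₁)
  by_cases h₂ : ∀ v ∈ S, nnbr G v = c₂
  · exact Or.inr (Or.inr (Or.inl h₂))
  push_neg at h₁ h₂
  obtain ⟨u₀, hu₀S, hu₀⟩ := h₁
  obtain ⟨w₀, hw₀S, hw₀⟩ := h₂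
  by_cases hneq : u₀ = w₀
  · subst hneq
    by_cases hv : ∃ v ∈ S, v ≠ u₀ ∧ v ≠ nnbr G u₀
    · obtain ⟨v, hvS, hvm, hvn⟩ := hv
      by_cases hv2 : nnbr G v = c₂
      · refine Or.inl ⟨v, u₀, hvS, hu₀S, hvm, by rw [hv2]; exact hc.symm,
          by rw [hv2]; exact Ne.symm (hSint u₀ hu₀S).2, hw₀⟩
      · exact Or.inl ⟨u₀, v, hu₀S, hvS, Ne.symm hvm, hu₀, Ne.symm hvn, hv2⟩
    · push_neg at hv
      have hall : ∀ v ∈ S, v = u₀ ∨ v = nnbr G u₀ := by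
        intro v hvS
        by_cases h : v = u₀
        · exact Or.inl h
        · exact Or.inr (hv v hvS h)
      obtain ⟨v, hvS, hvne⟩ := Finset.exists_mem_ne (s := S) (by omega) u₀
      have : v = nnbr G u₀ := hv v hvS hvne
      exact Or.inr (Or.inr (Or.inr ⟨u₀, hu₀S, this ▸ hvS, hall⟩))
  · by_cases hc' : nnbr G u₀ = w₀
    · by_cases hv : ∃ v ∈ S, v ≠ u₀ ∧ v ≠ w₀
      · obtain ⟨v, hvS, hvu, hvw⟩ := hv
        by_cases hv2 : nnbr G v = c₂
        · refine Or.inl ⟨v, w₀, hvS, hw₀S, hvw, by rw [hv2]; exact hc.symm,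
            by rw [hv2]; exact Ne.symm (hSint w₀ hw₀S).2, hw₀⟩
        · exact Or.inl ⟨u₀, v, hu₀S, hvS, Ne.symm hvu, hu₀,
            by rw [hc']; exact Ne.symm hvw, hv2⟩
      · push_neg at hv
        have hall : ∀ v ∈ S, v = u₀ ∨ v = nnbr G u₀ := by
          intro v hvS
          by_cases h : v = u₀
          · exact Or.inl h
          · exact Or.inr (by rw [hc']; exact hv v hvS h)
        exact Or.inr (Or.inr (Or.inr ⟨u₀, hu₀S, hc' ▸ hw₀S, hall⟩))
    · exact Or.inl ⟨u₀, w₀, hu₀S, hw₀S, hneq, hu₀, hc', hw₀⟩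

set_option maxHeartbeats 1000000 in
private lemma mainList [Fintype V] {G : SimpleGraph V} {c₁ c₂ : V}
    (hcon : G.Connected) (hcard : 6 ≤ Fintype.card V) (hc : c₁ ≠ c₂) (hne : ¬G.Adj c₁ c₂)
    (hdeg : ∀ v : V, v ≠ c₁ → v ≠ c₂ → (G.neighborSet v).ncard = Fintype.card V - 2)
    (a b : V) (hab : G.Adj a b)
    (hcase : a = c₁ ∨ (a ≠ c₁ ∧ a ≠ c₂ ∧ b ≠ c₁ ∧ b ≠ c₂)) :
    ∃ l : List V, l.Nodup ∧ (∀ x, x ∈ l) ∧ l.Chain' G.Adj ∧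
      l.head? = some c₁ ∧ l.getLast? = some c₂ ∧
      ([a, b] <:+: l ∨ [b, a] <:+: l) := by
  classical
  rcases hcase with rfl | ⟨ha₁, ha₂, hb₁, hb₂⟩
  · -- case a = c₁
    have hb₁ : b ≠ a := hab.ne'
    have hb₂ : b ≠ c₂ := fun h => hne (h ▸ hab)
    obtain ⟨u, w, hui, hwi, hub, hwb, huw, hunb, hnuw, hnwc⟩ :=
      beta_pick hcon hcard hc hne hdeg hb₁ hb₂ hab
    have keyb := nnbr_key hcard hdeg hb₁ hb₂
    have keyu := nnbr_key hcard hdeg hui.1 hui.2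
    have keyw := nnbr_key hcard hdeg hwi.1 hwi.2
    have habu : G.Adj b u := keyb.2.2 u hub hunb
    have hauw : G.Adj u w := keyu.2.2 w (Ne.symm huw) (fun h => hnuw h.symm)
    have hawc : G.Adj w c₂ := keyw.2.2 c₂ (Ne.symm hwi.2) (Ne.symm hnwc)
    have hch₀ : ([b, u, w, c₂] : List V).Chain' G.Adj :=
      List.isChain_cons_cons.mpr ⟨habu, List.isChain_cons_cons.mpr ⟨hauw, List.isChain_pair.mpr hawc⟩⟩
    have hnd₀ : ([b, u, w, c₂] : List V).Nodup := by
      simp only [List.nodup_cons, List.mem_cons, List.mem_singleton, List.not_mem_nil,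
        or_false, not_or, not_false_eq_true, List.nodup_nil, and_true]
      exact ⟨⟨Ne.symm hub, Ne.symm hwb, hb₂⟩, ⟨huw, hui.2⟩, hwi.2⟩
    set R : Finset V := Finset.univ \ {a, b, u, w, c₂} with hR
    obtain ⟨l₁, hch₁, hnd₁, hh₁, hl₁, hmem₁, hlen₁⟩ :=
      extend_many (G := G) (nnbr G) R [b, u, w, c₂] hch₀ hnd₀ (by simp)
        (by
          intro v hv
          rw [hR, Finset.mem_sdiff] at hv
          simp only [Finset.mem_insert, Finset.mem_singleton, not_or] at hv
          obtain ⟨-, hv1, hv2, hv3, hv4, hv5⟩ := hv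
          simp only [List.mem_cons, List.not_mem_nil, or_false, not_or]
          exact ⟨hv2, hv3, hv4, hv5⟩)
        (by
          intro v hv
          rw [hR, Finset.mem_sdiff] at hv
          simp only [Finset.mem_insert, Finset.mem_singleton, not_or] at hv
          exact (nnbr_key hcard hdeg hv.2.1 hv.2.2.2.2.2).2.2)
    obtain ⟨t, rfl⟩ : ∃ t, l₁ = b :: t := by
      cases l₁ with
      | nil => simp at hh₁
      | cons x t =>
        simp only [List.head?_cons, Option.some.injEq] at hh₁
        exact ⟨t, by rw [hh₁]⟩
    have hc₁l : a ∉ b :: t := by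
      intro hmem
      rw [hmem₁] at hmem
      rcases hmem with h | h
      · simp only [List.mem_cons, List.mem_singleton, List.not_mem_nil, or_false] at h
        rcases h with h | h | h | h
        · exact hb₁ h.symm
        · exact hui.1 h.symm
        · exact hwi.1 h.symm
        · exact hc h
      · rw [hR] at h; simp at h
    refine ⟨a :: b :: t, List.nodup_cons.mpr ⟨hc₁l, hnd₁⟩, ?_, ?_, rfl, ?_, ?_⟩
    · intro x
      rcases eq_or_ne x a with rfl | hx
      · simp
      · apply List.mem_cons_of_mem
        rw [hmem₁]
        by_cases hx2 : x = b ∨ x = u ∨ x = w ∨ x = c₂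
        · left; simpa using hx2
        · right
          push_neg at hx2
          rw [hR, Finset.mem_sdiff]
          simp only [Finset.mem_insert, Finset.mem_singleton, not_or]
          exact ⟨Finset.mem_univ x, hx, hx2.1, hx2.2.1, hx2.2.2.1, hx2.2.2.2⟩
    · exact List.isChain_cons_cons.mpr ⟨hab, hch₁⟩
    · rw [List.getLast?_cons_cons, hl₁]; simp
    · exact Or.inl ⟨[], t, by simp⟩
  · -- case a, b interior
    set S : Finset V := Finset.univ \ {c₁, c₂, a, b} with hS
    have hSmem : ∀ v, v ∈ S ↔ v ≠ c₁ ∧ v ≠ c₂ ∧ v ≠ a ∧ v ≠ b := by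
      intro v; rw [hS, Finset.mem_sdiff]; simp [not_or]
    have hScard : 2 ≤ S.card := by
      rw [hS, Finset.card_sdiff_of_subset (Finset.subset_univ _), Finset.card_univ]
      have : ({c₁, c₂, a, b} : Finset V).card ≤ 4 := by
        apply le_trans (Finset.card_insert_le _ _); apply Nat.succ_le_succ
        apply le_trans (Finset.card_insert_le _ _); apply Nat.succ_le_succ
        apply le_trans (Finset.card_insert_le _ _); simp
      omega
    have hSint : ∀ v ∈ S, v ≠ c₁ ∧ v ≠ c₂ :=
      fun v hv => ⟨((hSmem v).mp hv).1, ((hSmem v).mp hv).2.1⟩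
    have haS : a ∉ S := fun h => ((hSmem a).mp h).2.2.1 rfl
    have hbS : b ∉ S := fun h => ((hSmem b).mp h).2.2.2 rfl
    have hc₁S : c₁ ∉ S := fun h => ((hSmem c₁).mp h).1 rfl
    have hc₂S : c₂ ∉ S := fun h => ((hSmem c₂).mp h).2.1 rfl
    have keya := nnbr_key hcard hdeg ha₁ ha₂
    have keyb := nnbr_key hcard hdeg hb₁ hb₂
    -- facts about S.toList
    have hSl_ne : S.toList ≠ [] := by
      intro h
      have h2 := Finset.length_toList S
      rw [h] at h2; simp at h2; omega
    have hSl_nd : S.toList.Nodup := Finset.nodup_toList S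
    have hmemSl : ∀ v : V, v ∈ S.toList ↔ v ∈ S := fun v => Finset.mem_toList
    rcases alpha_pick hcard hc hdeg S hSint hScard with hmain | hα1 | hα2 | hα3
    · -- main branch
      obtain ⟨u, w, huS, hwS, huw, hunc, hunw, hwnc⟩ := hmain
      obtain ⟨hu1, hu2, hua, hub⟩ := (hSmem u).mp huS
      obtain ⟨hw1, hw2, hwa, hwb⟩ := (hSmem w).mp hwS
      have keyu := nnbr_key hcard hdeg hu1 hu2
      have keyw := nnbr_key hcard hdeg hw1 hw2
      have h1 : G.Adj c₁ u := (keyu.2.2 c₁ (Ne.symm hu1) (Ne.symm hunc)).symm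
      have h2 : G.Adj u w := keyu.2.2 w (Ne.symm huw) (fun h => hunw h.symm)
      have h3 : G.Adj w c₂ := keyw.2.2 c₂ (Ne.symm hw2) (Ne.symm hwnc)
      have hch₀ : ([c₁, u, w, c₂] : List V).Chain' G.Adj :=
        List.isChain_cons_cons.mpr ⟨h1, List.isChain_cons_cons.mpr ⟨h2, List.isChain_pair.mpr h3⟩⟩
      have hnd₀ : ([c₁, u, w, c₂] : List V).Nodup := by
        simp only [List.nodup_cons, List.mem_cons, List.mem_singleton, List.not_mem_nil,
          or_false, not_or, not_false_eq_true, List.nodup_nil, and_true]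
        exact ⟨⟨Ne.symm hu1, Ne.symm hw1, hc⟩, ⟨huw, hu2⟩, hw2⟩
      set R : Finset V := S \ {u, w} with hR
      obtain ⟨l₁, hch₁, hnd₁, hh₁, hl₁, hmem₁, hlen₁⟩ :=
        extend_many (G := G) (nnbr G) R [c₁, u, w, c₂] hch₀ hnd₀ (by simp)
          (by
            intro v hv
            rw [hR, Finset.mem_sdiff] at hv
            obtain ⟨hvS, hvuw⟩ := hv
            obtain ⟨hv1, hv2, hv3, hv4⟩ := (hSmem v).mp hvS
            simp only [Finset.mem_insert, Finset.mem_singleton, not_or] at hvuw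
            simp only [List.mem_cons, List.not_mem_nil, or_false, not_or]
            exact ⟨hv1, hvuw.1, hvuw.2, hv2⟩)
          (by
            intro v hv
            rw [hR, Finset.mem_sdiff] at hv
            obtain ⟨hv1, hv2, -, -⟩ := (hSmem v).mp hv.1
            exact (nnbr_key hcard hdeg hv1 hv2).2.2)
      have hal : a ∉ l₁ := by
        rw [hmem₁]
        rintro (h | h)
        · simp only [List.mem_cons, List.mem_singleton, List.not_mem_nil, or_false] at h
          rcases h with h | h | h | h
          · exact ha₁ h
          · exact hua h.symm
          · exact hwa h.symm
          · exact ha₂ h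
        · rw [hR, Finset.mem_sdiff] at h; exact haS h.1
      have hbl : b ∉ l₁ := by
        rw [hmem₁]
        rintro (h | h)
        · simp only [List.mem_cons, List.mem_singleton, List.not_mem_nil, or_false] at h
          rcases h with h | h | h | h
          · exact hb₁ h
          · exact hub h.symm
          · exact hwb h.symm
          · exact hb₂ h
        · rw [hR, Finset.mem_sdiff] at h; exact hbS h.1
      obtain ⟨l₂, l₃, -, -, -, hch₂, hnd₂, hh₂, hl₂, hmem₂, -⟩ :=
        insert_mid l₁ hch₁ hnd₁ (by rw [hlen₁]; simp) [a, b] (by simp)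
          (List.isChain_pair.mpr hab) (by simp [hab.ne])
          (by
            intro x hx
            simp only [List.mem_cons, List.mem_singleton, List.not_mem_nil, or_false] at hx
            rcases hx with rfl | rfl
            exacts [hal, hbl])
          (nnbr G a) (nnbr G b)
          (by
            intro x hx hxna
            exact (keya.2.2 x (fun h => hal (h ▸ hx)) hxna).symm)
          (by
            intro x hx hxnb
            exact keyb.2.2 x (fun h => hbl (h ▸ hx)) hxnb)
      refine ⟨l₂ ++ [a, b] ++ l₃, hnd₂, ?_, hch₂, hh₂.trans hh₁, hl₂.trans (hl₁.trans (by simp)),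
        Or.inl ⟨l₂, l₃, rfl⟩⟩
      intro x
      rw [hmem₂, hmem₁]
      by_cases hx : x = a ∨ x = b
      · right; simpa using hx
      · left
        by_cases hy : x = c₁ ∨ x = u ∨ x = w ∨ x = c₂
        · left; simpa using hy
        · right
          push_neg at hx hy
          rw [hR, Finset.mem_sdiff, hSmem]
          refine ⟨⟨hy.1, hy.2.2.2, hx.1, hx.2⟩, ?_⟩
          simp only [Finset.mem_insert, Finset.mem_singleton, not_or]
          exact ⟨hy.2.1, hy.2.2.1⟩
    · -- all nnbr = c₁ on S
      obtain ⟨y, hy⟩ := exists_adj hcon (by omega) c₁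
      have hy1 : y ≠ c₁ := hy.ne'
      have hy2 : y ≠ c₂ := fun h => hne (h ▸ hy)
      have hyS : y ∉ S := by
        intro hyS
        exact (nnbr_key hcard hdeg hy1 hy2).2.1 (hα1 y hyS ▸ hy.symm)
      have hyab : y = a ∨ y = b := by
        by_contra h
        push_neg at h
        exact hyS ((hSmem y).mpr ⟨hy1, hy2, h.1, h.2⟩)
      have hchS : S.toList.Chain' G.Adj := by
        apply pchain_of_forall _ hSl_nd
        intro p hp q hq hpq
        rw [hmemSl] at hp hq
        obtain ⟨hp1, hp2, -, -⟩ := (hSmem p).mp hp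
        refine (nnbr_key hcard hdeg hp1 hp2).2.2 q (Ne.symm hpq) ?_
        rw [hα1 p hp]; exact ((hSmem q).mp hq).1
      have build : ∀ ζ₁ ζ₂ : V, ((ζ₁ = a ∧ ζ₂ = b) ∨ (ζ₁ = b ∧ ζ₂ = a)) → G.Adj c₁ ζ₁ →
          ∃ l : List V, l.Nodup ∧ (∀ x, x ∈ l) ∧ l.Chain' G.Adj ∧
            l.head? = some c₁ ∧ l.getLast? = some c₂ ∧
            ([a, b] <:+: l ∨ [b, a] <:+: l) := by
        intro ζ₁ ζ₂ hζ hadj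
        have hz12 : G.Adj ζ₁ ζ₂ := by
          rcases hζ with ⟨rfl, rfl⟩ | ⟨rfl, rfl⟩
          exacts [hab, hab.symm]
        have hz1i : ζ₁ ≠ c₁ ∧ ζ₁ ≠ c₂ := by
          rcases hζ with ⟨rfl, -⟩ | ⟨rfl, -⟩
          exacts [⟨ha₁, ha₂⟩, ⟨hb₁, hb₂⟩]
        have hz2i : ζ₂ ≠ c₁ ∧ ζ₂ ≠ c₂ := by
          rcases hζ with ⟨-, rfl⟩ | ⟨-, rfl⟩
          exacts [⟨hb₁, hb₂⟩, ⟨ha₁, ha₂⟩]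
        have hz1S : ζ₁ ∉ S := by
          rcases hζ with ⟨rfl, -⟩ | ⟨rfl, -⟩
          exacts [haS, hbS]
        have hz2S : ζ₂ ∉ S := by
          rcases hζ with ⟨-, rfl⟩ | ⟨-, rfl⟩
          exacts [hbS, haS]
        have hz12ne : ζ₁ ≠ ζ₂ := hz12.ne
        have hlink : ∀ q ∈ S, G.Adj ζ₂ q := by
          intro q hq
          obtain ⟨hq1, hq2, -, -⟩ := (hSmem q).mp hq
          refine ((nnbr_key hcard hdeg hq1 hq2).2.2 ζ₂ (fun h => hz2S (h ▸ hq)) ?_).symm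
          rw [hα1 q hq]; exact hz2i.1
        have hlast : G.Adj (S.toList.getLast hSl_ne) c₂ := by
          have hmem : S.toList.getLast hSl_ne ∈ S := (hmemSl _).mp (List.getLast_mem hSl_ne)
          obtain ⟨hq1, hq2, -, -⟩ := (hSmem _).mp hmem
          refine (nnbr_key hcard hdeg hq1 hq2).2.2 c₂ (Ne.symm hq2) ?_
          rw [hα1 _ hmem]; exact Ne.symm hc
        have hlch : (c₁ :: ζ₁ :: ζ₂ :: S.toList).Chain' G.Adj := by
          refine List.isChain_cons_cons.mpr ⟨hadj, List.isChain_cons_cons.mpr ⟨hz12, ?_⟩⟩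
          refine List.isChain_cons.mpr ⟨?_, hchS⟩
          intro yy hyy
          have : yy ∈ S.toList := by
            cases hl : S.toList with
            | nil => rw [hl] at hyy; simp at hyy
            | cons z zs =>
              rw [hl] at hyy
              simp only [List.head?_cons, Option.mem_def, Option.some.injEq] at hyy
              rw [← hyy]; exact List.mem_cons_self (a := z) (l := zs)
          exact hlink yy ((hmemSl yy).mp this)
        have hlne : (c₁ :: ζ₁ :: ζ₂ :: S.toList) ≠ [] := by simp
        have hgl : (c₁ :: ζ₁ :: ζ₂ :: S.toList).getLast hlne = S.toList.getLast hSl_ne := by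
          rw [List.getLast_cons (by simp), List.getLast_cons (by simp),
            List.getLast_cons hSl_ne]
        refine ⟨(c₁ :: ζ₁ :: ζ₂ :: S.toList) ++ [c₂], ?_, ?_, ?_, by simp,
          by rw [List.getLast?_append]; simp, ?_⟩
        · rw [List.nodup_append']
          refine ⟨?_, by simp, ?_⟩
          · simp only [List.nodup_cons]
            refine ⟨?_, ?_, ?_, hSl_nd⟩
            · simp only [List.mem_cons, not_or]
              exact ⟨Ne.symm hz1i.1, Ne.symm hz2i.1, fun h => hc₁S ((hmemSl c₁).mp h)⟩
            · simp only [List.mem_cons, not_or]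
              exact ⟨hz12ne, fun h => hz1S ((hmemSl ζ₁).mp h)⟩
            · exact fun h => hz2S ((hmemSl ζ₂).mp h)
          · intro x hx hx2
            simp only [List.mem_singleton] at hx2
            simp only [List.mem_cons] at hx
            rcases hx with h | h | h | h
            · exact hc (h.symm.trans hx2)
            · exact hz1i.2 (h.symm.trans hx2)
            · exact hz2i.2 (h.symm.trans hx2)
            · rw [hx2] at h; exact hc₂S ((hmemSl c₂).mp h)
        · intro x
          simp only [List.mem_append, List.mem_cons, List.mem_singleton]
          by_cases hx : x = c₁ ∨ x = ζ₁ ∨ x = ζ₂ ∨ x = c₂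
          · rcases hx with h | h | h | h
            · exact Or.inl (Or.inl h)
            · exact Or.inl (Or.inr (Or.inl h))
            · exact Or.inl (Or.inr (Or.inr (Or.inl h)))
            · exact Or.inr (by simp [h])
          · push_neg at hx
            have hxab : x ≠ a ∧ x ≠ b := by
              rcases hζ with ⟨rfl, rfl⟩ | ⟨rfl, rfl⟩
              exacts [⟨hx.2.1, hx.2.2.1⟩, ⟨hx.2.2.1, hx.2.1⟩]
            exact Or.inl (Or.inr (Or.inr (Or.inr ((hmemSl x).mpr
              ((hSmem x).mpr ⟨hx.1, hx.2.2.2, hxab.1, hxab.2⟩)))))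
        · exact chain'_append_singleton hlne hlch (hgl ▸ hlast)
        · rcases hζ with ⟨rfl, rfl⟩ | ⟨rfl, rfl⟩
          · exact Or.inl ⟨[c₁], S.toList ++ [c₂], by simp⟩
          · exact Or.inr ⟨[c₁], S.toList ++ [c₂], by simp⟩
      rcases hyab with rfl | rfl
      · exact build y b (Or.inl ⟨rfl, rfl⟩) hy
      · exact build y a (Or.inr ⟨rfl, rfl⟩) hy
    · -- all nnbr = c₂ on S
      obtain ⟨y, hy⟩ := exists_adj hcon (by omega) c₂
      have hy2 : y ≠ c₂ := hy.ne'
      have hy1 : y ≠ c₁ := fun h => hne (h ▸ hy).symm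
      have hyS : y ∉ S := by
        intro hyS
        exact (nnbr_key hcard hdeg hy1 hy2).2.1 (hα2 y hyS ▸ hy.symm)
      have hyab : y = a ∨ y = b := by
        by_contra h
        push_neg at h
        exact hyS ((hSmem y).mpr ⟨hy1, hy2, h.1, h.2⟩)
      have hchS : S.toList.Chain' G.Adj := by
        apply pchain_of_forall _ hSl_nd
        intro p hp q hq hpq
        rw [hmemSl] at hp hq
        obtain ⟨hp1, hp2, -, -⟩ := (hSmem p).mp hp
        refine (nnbr_key hcard hdeg hp1 hp2).2.2 q (Ne.symm hpq) ?_
        rw [hα2 p hp]; exact ((hSmem q).mp hq).2.1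
      have build : ∀ ζ₁ ζ₂ : V, ((ζ₁ = a ∧ ζ₂ = b) ∨ (ζ₁ = b ∧ ζ₂ = a)) → G.Adj c₂ ζ₂ →
          ∃ l : List V, l.Nodup ∧ (∀ x, x ∈ l) ∧ l.Chain' G.Adj ∧
            l.head? = some c₁ ∧ l.getLast? = some c₂ ∧
            ([a, b] <:+: l ∨ [b, a] <:+: l) := by
        intro ζ₁ ζ₂ hζ hadj
        have hz12 : G.Adj ζ₁ ζ₂ := by
          rcases hζ with ⟨rfl, rfl⟩ | ⟨rfl, rfl⟩
          exacts [hab, hab.symm]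
        have hz1i : ζ₁ ≠ c₁ ∧ ζ₁ ≠ c₂ := by
          rcases hζ with ⟨rfl, -⟩ | ⟨rfl, -⟩
          exacts [⟨ha₁, ha₂⟩, ⟨hb₁, hb₂⟩]
        have hz2i : ζ₂ ≠ c₁ ∧ ζ₂ ≠ c₂ := by
          rcases hζ with ⟨-, rfl⟩ | ⟨-, rfl⟩
          exacts [⟨hb₁, hb₂⟩, ⟨ha₁, ha₂⟩]
        have hz1S : ζ₁ ∉ S := by
          rcases hζ with ⟨rfl, -⟩ | ⟨rfl, -⟩
          exacts [haS, hbS]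
        have hz2S : ζ₂ ∉ S := by
          rcases hζ with ⟨-, rfl⟩ | ⟨-, rfl⟩
          exacts [hbS, haS]
        have hz12ne : ζ₁ ≠ ζ₂ := hz12.ne
        have hfirst : ∀ q ∈ S, G.Adj c₁ q := by
          intro q hq
          obtain ⟨hq1, hq2, -, -⟩ := (hSmem q).mp hq
          refine ((nnbr_key hcard hdeg hq1 hq2).2.2 c₁ (Ne.symm hq1) ?_).symm
          rw [hα2 q hq]; exact hc
        have hlast : G.Adj (S.toList.getLast hSl_ne) ζ₁ := by
          have hmem : S.toList.getLast hSl_ne ∈ S := (hmemSl _).mp (List.getLast_mem hSl_ne)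
          obtain ⟨hq1, hq2, -, -⟩ := (hSmem _).mp hmem
          refine (nnbr_key hcard hdeg hq1 hq2).2.2 ζ₁ (fun h => hz1S (h ▸ hmem)) ?_
          rw [hα2 _ hmem]; exact hz1i.2
        have hlne : (c₁ :: S.toList) ≠ [] := by simp
        have hgl : (c₁ :: S.toList).getLast hlne = S.toList.getLast hSl_ne :=
          List.getLast_cons hSl_ne
        have hlch : (c₁ :: S.toList).Chain' G.Adj := by
          refine List.isChain_cons.mpr ⟨?_, hchS⟩
          intro yy hyy
          have : yy ∈ S.toList := by
            cases hl : S.toList with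
            | nil => rw [hl] at hyy; simp at hyy
            | cons z zs =>
              rw [hl] at hyy
              simp only [List.head?_cons, Option.mem_def, Option.some.injEq] at hyy
              rw [← hyy]; exact List.mem_cons_self (a := z) (l := zs)
          exact hfirst yy ((hmemSl yy).mp this)
        refine ⟨(c₁ :: S.toList) ++ [ζ₁, ζ₂, c₂], ?_, ?_, ?_, by simp,
          by rw [List.getLast?_append]; simp, ?_⟩
        · rw [List.nodup_append']
          refine ⟨?_, ?_, ?_⟩
          · simp only [List.nodup_cons]
            exact ⟨fun h => hc₁S ((hmemSl c₁).mp h), hSl_nd⟩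
          · refine List.nodup_cons.mpr ⟨?_, List.nodup_cons.mpr ⟨?_, List.nodup_singleton _⟩⟩
            · simp only [List.mem_cons, List.mem_singleton, List.not_mem_nil, or_false, not_or]
              exact ⟨hz12ne, hz1i.2⟩
            · simp only [List.mem_singleton]
              exact hz2i.2
          · intro x hx hx2
            simp only [List.mem_cons, List.mem_singleton, List.not_mem_nil, or_false] at hx hx2
            rcases hx with h | h
            · subst h
              rcases hx2 with h | h | h
              · exact hz1i.1 h.symm
              · exact hz2i.1 h.symm
              · exact hc h
            · have hxS := (hmemSl x).mp h
              rcases hx2 with h' | h' | h'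
              · exact hz1S (h' ▸ hxS)
              · exact hz2S (h' ▸ hxS)
              · exact hc₂S (h' ▸ hxS)
        · intro x
          simp only [List.mem_append, List.mem_cons, List.mem_singleton]
          by_cases hx : x = c₁ ∨ x = ζ₁ ∨ x = ζ₂ ∨ x = c₂
          · rcases hx with h | h | h | h
            · exact Or.inl (Or.inl h)
            · exact Or.inr (Or.inl h)
            · exact Or.inr (Or.inr (Or.inl h))
            · exact Or.inr (Or.inr (Or.inr (by simp [h])))
          · push_neg at hx
            have hxab : x ≠ a ∧ x ≠ b := by
              rcases hζ with ⟨rfl, rfl⟩ | ⟨rfl, rfl⟩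
              exacts [⟨hx.2.1, hx.2.2.1⟩, ⟨hx.2.2.1, hx.2.1⟩]
            exact Or.inl (Or.inr ((hmemSl x).mpr
              ((hSmem x).mpr ⟨hx.1, hx.2.2.2, hxab.1, hxab.2⟩)))
        · rw [List.Chain', List.isChain_append]
          refine ⟨hlch, ?_, ?_⟩
          · exact List.isChain_cons_cons.mpr ⟨hz12, List.isChain_pair.mpr hadj.symm⟩
          · intro x hx yy hyy
            simp only [List.head?_cons, Option.mem_def, Option.some.injEq] at hyy
            rw [List.getLast?_eq_getLast hlne, Option.mem_def, Option.some.injEq] at hx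
            subst hyy
            rw [← hx, hgl]
            exact hlast
        · rcases hζ with ⟨rfl, rfl⟩ | ⟨rfl, rfl⟩
          · exact Or.inl ⟨c₁ :: S.toList, [c₂], by simp⟩
          · exact Or.inr ⟨c₁ :: S.toList, [c₂], by simp⟩
      rcases hyab with rfl | rfl
      · exact build b y (Or.inr ⟨rfl, rfl⟩) hy
      · exact build a y (Or.inl ⟨rfl, rfl⟩) hy
    · -- S = {p, nnbr p}
      obtain ⟨p, hpS, hqS, hall⟩ := hα3
      obtain ⟨hp1, hp2, hpa, hpb⟩ := (hSmem p).mp hpS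
      obtain ⟨hq1, hq2, hqa, hqb⟩ := (hSmem _).mp hqS
      have keyp := nnbr_key hcard hdeg hp1 hp2
      have keyq := nnbr_key hcard hdeg hq1 hq2
      have hqp : nnbr G (nnbr G p) = p := nnbr_symm hcard hdeg hp1 hp2 hq1 hq2 rfl
      have hpq : p ≠ nnbr G p := Ne.symm keyp.1
      have e1 : G.Adj c₁ p := (keyp.2.2 c₁ (Ne.symm hp1) (Ne.symm hq1)).symm
      have e2 : G.Adj p a := keyp.2.2 a (Ne.symm hpa) (Ne.symm hqa)
      have e4 : G.Adj b (nnbr G p) := (keyq.2.2 b (Ne.symm hqb) (by rw [hqp]; exact Ne.symm hpb)).symm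
      have e5 : G.Adj (nnbr G p) c₂ := keyq.2.2 c₂ (Ne.symm hq2) (by rw [hqp]; exact Ne.symm hp2)
      refine ⟨[c₁, p, a, b, nnbr G p, c₂], ?_, ?_, ?_, rfl, by simp,
        Or.inl ⟨[c₁, p], [nnbr G p, c₂], by simp⟩⟩
      · simp only [List.nodup_cons, List.mem_cons, List.mem_singleton, List.not_mem_nil,
          or_false, not_or, not_false_eq_true, List.nodup_nil, and_true]
        exact ⟨⟨Ne.symm hp1, Ne.symm ha₁, Ne.symm hb₁, Ne.symm hq1, hc⟩,
          ⟨hpa, hpb, hpq, hp2⟩, ⟨hab.ne, Ne.symm hqa, ha₂⟩, ⟨Ne.symm hqb, hb₂⟩, hq2⟩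
      · intro x
        simp only [List.mem_cons, List.mem_singleton, List.not_mem_nil, or_false]
        by_cases hx : x = c₁ ∨ x = c₂ ∨ x = a ∨ x = b
        · tauto
        · push_neg at hx
          have hxS : x ∈ S := (hSmem x).mpr ⟨hx.1, hx.2.1, hx.2.2.1, hx.2.2.2⟩
          rcases hall x hxS with h | h
          · tauto
          · tauto
      · exact List.isChain_cons_cons.mpr ⟨e1, List.isChain_cons_cons.mpr ⟨e2, List.isChain_cons_cons.mpr ⟨hab,
          List.isChain_cons_cons.mpr ⟨e4, List.isChain_pair.mpr e5⟩⟩⟩⟩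

private lemma mainListFull [Fintype V] {G : SimpleGraph V} {c₁ c₂ : V}
    (hcon : G.Connected) (hcard : 6 ≤ Fintype.card V) (hc : c₁ ≠ c₂) (hne : ¬G.Adj c₁ c₂)
    (hdeg : ∀ v : V, v ≠ c₁ → v ≠ c₂ → (G.neighborSet v).ncard = Fintype.card V - 2)
    (a b : V) (hab : G.Adj a b) :
    ∃ l : List V, l.Nodup ∧ (∀ x, x ∈ l) ∧ l.Chain' G.Adj ∧
      l.head? = some c₁ ∧ l.getLast? = some c₂ ∧ ([a, b] <:+: l ∨ [b, a] <:+: l) := by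
  have hflip : flip G.Adj = G.Adj := by
    funext u v
    exact propext ⟨fun h => h.symm, fun h => h.symm⟩
  have rev : ∀ l : List V, l.Nodup → (∀ x, x ∈ l) → l.Chain' G.Adj →
      l.head? = some c₂ → l.getLast? = some c₁ → ([a, b] <:+: l ∨ [b, a] <:+: l) →
      ∃ l' : List V, l'.Nodup ∧ (∀ x, x ∈ l') ∧ l'.Chain' G.Adj ∧
        l'.head? = some c₁ ∧ l'.getLast? = some c₂ ∧ ([a, b] <:+: l' ∨ [b, a] <:+: l') := by
    intro l hnd hall hch hh hl hinf
    refine ⟨l.reverse, List.nodup_reverse.mpr hnd, fun x => by simp [hall x], ?_, ?_, ?_, ?_⟩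
    · rw [List.Chain', List.isChain_reverse]; exact hch.imp (fun _ _ h => h.symm)
    · rw [List.head?_reverse]; exact hl
    · rw [List.getLast?_reverse]; exact hh
    · rcases hinf with h | h
      · exact Or.inr (by simpa using List.reverse_infix.mpr h)
      · exact Or.inl (by simpa using List.reverse_infix.mpr h)
  by_cases hac₁ : a = c₁
  · exact mainList hcon hcard hc hne hdeg a b hab (Or.inl hac₁)
  by_cases hbc₁ : b = c₁
  · obtain ⟨l, h1, h2, h3, h4, h5, h6⟩ :=
      mainList hcon hcard hc hne hdeg b a hab.symm (Or.inl hbc₁)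
    exact ⟨l, h1, h2, h3, h4, h5, h6.symm⟩
  by_cases hac₂ : a = c₂
  · obtain ⟨l, h1, h2, h3, h4, h5, h6⟩ := mainList (c₁ := c₂) (c₂ := c₁) hcon hcard hc.symm
      (fun h => hne h.symm) (fun v hv1 hv2 => hdeg v hv2 hv1) a b hab (Or.inl hac₂)
    exact rev l h1 h2 h3 h4 h5 h6
  by_cases hbc₂ : b = c₂
  · obtain ⟨l, h1, h2, h3, h4, h5, h6⟩ := mainList (c₁ := c₂) (c₂ := c₁) hcon hcard hc.symm
      (fun h => hne h.symm) (fun v hv1 hv2 => hdeg v hv2 hv1) b a hab.symm (Or.inl hbc₂)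
    exact rev l h1 h2 h3 h4 h5 h6.symm
  · exact mainList hcon hcard hc hne hdeg a b hab (Or.inr ⟨hac₁, hac₂, hbc₁, hbc₂⟩)

theorem stmt_11' {V : Type*} [Fintype V] (G : SimpleGraph V) (hcon : G.Connected)
    (hcard : 6 ≤ Fintype.card V) (c₁ c₂ : V) (hc : c₁ ≠ c₂) (hne : ¬G.Adj c₁ c₂)
    (hdeg : ∀ v : V, v ≠ c₁ → v ≠ c₂ → (G.neighborSet v).ncard = Fintype.card V - 2)
    (a b : V) (hab : G.Adj a b) :
    ∃ x : ℕ → V,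
      ((∀ i j, 1 ≤ i → i ≤ Fintype.card V → 1 ≤ j → j ≤ Fintype.card V → x i = x j → i = j) ∧
        ∀ i, 1 ≤ i → i < Fintype.card V → G.Adj (x i) (x (i + 1))) ∧
      x 1 = c₁ ∧ x (Fintype.card V) = c₂ ∧
      ∃ i, 1 ≤ i ∧ i < Fintype.card V ∧
        ((x i = a ∧ x (i + 1) = b) ∨ (x i = b ∧ x (i + 1) = a)) := by
  classical
  obtain ⟨l, hnd, hall, hch, hh, hl, hinf⟩ := mainListFull hcon hcard hc hne hdeg a b hab
  have hlne : l ≠ [] := by rintro rfl; simp at hh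
  have hlen : l.length = Fintype.card V := by
    have h1 : l.toFinset = Finset.univ :=
      Finset.eq_univ_iff_forall.mpr (fun x => List.mem_toFinset.mpr (hall x))
    rw [← List.toFinset_card_of_nodup hnd, h1, Finset.card_univ]
  refine ⟨fun i => l.getD (i - 1) c₁, ⟨?_, ?_⟩, ?_, ?_, ?_⟩
  · intro i j h1i hin h1j hjn heq
    have hi' : i - 1 < l.length := by omega
    have hj' : j - 1 < l.length := by omega
    simp only at heq
    rw [List.getD_eq_getElem l c₁ hi', List.getD_eq_getElem l c₁ hj'] at heq
    have := (hnd.getElem_inj_iff).mp heq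
    omega
  · intro i h1 hin
    have h2 := List.isChain_iff_getElem.mp hch (i - 1) (by omega)
    have e1 : l.getD (i - 1) c₁ = l[i - 1]'(by omega) := List.getD_eq_getElem l c₁ (by omega)
    have e2 : l.getD (i + 1 - 1) c₁ = l[i - 1 + 1]'(by omega) := by
      have h3 : i + 1 - 1 = i - 1 + 1 := by omega
      rw [h3]; exact List.getD_eq_getElem l c₁ (by omega)
    simp only
    rw [e1, e2]
    exact h2
  · show l.getD 0 c₁ = c₁
    rw [List.getD_eq_getElem l c₁ (by omega), List.getElem_zero]
    rw [List.head?_eq_head hlne] at hh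
    exact Option.some.inj hh
  · show l.getD (Fintype.card V - 1) c₁ = c₂
    rw [List.getD_eq_getElem l c₁ (by omega)]
    rw [List.getLast?_eq_getLast hlne] at hl
    have h2 : l.getLast hlne = c₂ := Option.some.inj hl
    rw [← h2, List.getLast_eq_getElem hlne]
    have h3 : Fintype.card V - 1 = l.length - 1 := by omega
    simp only [h3]
  · rcases hinf with h | h
    · obtain ⟨s, t, hst⟩ := h
      have hstlen : s.length + 2 + t.length = l.length := by
        have h4 := congrArg List.length hst
        simp at h4
        omega
      refine ⟨s.length + 1, by omega, by omega, Or.inl ⟨?_, ?_⟩⟩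
      · show l.getD (s.length + 1 - 1) c₁ = a
        have h3 : s.length + 1 - 1 = s.length := by omega
        rw [h3, ← hst, List.append_assoc, List.getD_eq_getElem _ _ (by simp),
          List.getElem_append_right (Nat.le_refl _)]
        simp
      · show l.getD (s.length + 1 + 1 - 1) c₁ = b
        have h3 : s.length + 1 + 1 - 1 = s.length + 1 := by omega
        rw [h3, ← hst, List.append_assoc, List.getD_eq_getElem _ _ (by simp),
          List.getElem_append_right (by omega)]
        have h4 : s.length + 1 - s.length = 1 := by omega
        simp only [h4]
        simp
    · obtain ⟨s, t, hst⟩ := h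
      have hstlen : s.length + 2 + t.length = l.length := by
        have h4 := congrArg List.length hst
        simp at h4
        omega
      refine ⟨s.length + 1, by omega, by omega, Or.inr ⟨?_, ?_⟩⟩
      · show l.getD (s.length + 1 - 1) c₁ = b
        have h3 : s.length + 1 - 1 = s.length := by omega
        rw [h3, ← hst, List.append_assoc, List.getD_eq_getElem _ _ (by simp),
          List.getElem_append_right (Nat.le_refl _)]
        simp
      · show l.getD (s.length + 1 + 1 - 1) c₁ = a
        have h3 : s.length + 1 + 1 - 1 = s.length + 1 := by omega
        rw [h3, ← hst, List.append_assoc, List.getD_eq_getElem _ _ (by simp),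
          List.getElem_append_right (by omega)]
        have h4 : s.length + 1 - s.length = 1 := by omega
        simp only [h4]
        simp

end HamAux

/-- Proposition 4.1 (i): Hamilton path from `c₁` to `c₂` through any edge. -/
theorem stmt_11 {V : Type*} [Fintype V] (G : SimpleGraph V) (hcon : G.Connected)
    (hcard : 6 ≤ Fintype.card V) (c₁ c₂ : V) (hc : c₁ ≠ c₂) (hne : ¬G.Adj c₁ c₂)
    (hdeg : ∀ v : V, v ≠ c₁ → v ≠ c₂ → (G.neighborSet v).ncard = Fintype.card V - 2)
    (a b : V) (hab : G.Adj a b) :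
    ∃ x : ℕ → V, IsIndexedPath G x (Fintype.card V) ∧
      x 1 = c₁ ∧ x (Fintype.card V) = c₂ ∧
      ∃ i, 1 ≤ i ∧ i < Fintype.card V ∧
        ((x i = a ∧ x (i + 1) = b) ∨ (x i = b ∧ x (i + 1) = a)) := by
  exact stmt_11' G hcon hcard c₁ c₂ hc hne hdeg a b hab
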